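/- Let k ≥ 1, let 𝔤 = ut(2k+1,ℝ), and let f be the linear functional on 𝔤 given by f(x) = trace(F·x), where F is the (2k+1)×(2k+1) matrix whose only nonzero entries are λ_1,…,λ_k, all nonzero, placed on the antidiagonal of the k×k block occupying rows k+2,…,2k+1 and columns 1,…,k (λ_1 in the lower-left corner of that block, λ_k in its upper-right corner). Let 𝔭 = {x ∈ ut(2k+1,ℝ) : x_{ab} = 0 unless a ≤ k+1 and b ≥ k+2}. Then 𝔭 is an abelian Lie subalgebra of 𝔤 of dimension k²+k, the form B_f(x,y) = f(⁅x,y⁆) vanishes identically on 𝔭, and 𝔭 is a polarization of f: every linear subspace W of 𝔤 containing 𝔭 on which B_f vanishes identically equals 𝔭. -/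

import Mathlib

open Matrix

noncomputable section

/-- `x` is a strictly upper triangular matrix, i.e. an element of `ut(n,ℝ)`. -/
def IsStrictUpper {n : ℕ} (x : Matrix (Fin n) (Fin n) ℝ) : Prop :=
  ∀ i j : Fin n, j ≤ i → x i j = 0

/-- The subspace `𝔭` of `ut(2k+1,ℝ)` of matrices `x` with `x a b = 0` unless
`a ≤ k+1` and `b ≥ k+2` (1-based numbering). -/
def polOdd (k : ℕ) : Submodule ℝ (Matrix (Fin (2*k+1)) (Fin (2*k+1)) ℝ) where
  carrier := {x | ∀ a b : Fin (2*k+1), ¬(a.val ≤ k ∧ k+1 ≤ b.val) → x a b = 0}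
  add_mem' := by
    intro x y hx hy a b h
    simp only [Matrix.add_apply, hx a b h, hy a b h, add_zero]
  zero_mem' := by
    intro a b _
    rfl
  smul_mem' := by
    intro c x hx a b h
    simp only [Matrix.smul_apply, hx a b h, smul_zero]

/-- The matrix `F` of the regular functional on `ut(2k+1,ℝ)`:  `λ₁,…,λ_k` on the
antidiagonal of the `k×k` block with rows `k+2,…,2k+1` and columns `1,…,k` (1-based),
with `λ₁` in the lower-left corner and `λ_k` in the upper-right corner of that block. -/
def FregOdd (k : ℕ) (lam : Fin k → ℝ) : Matrix (Fin (2*k+1)) (Fin (2*k+1)) ℝ :=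
  ∑ i : Fin k, lam i • Matrix.single
      (⟨2*k-i.val, by have := i.isLt; omega⟩ : Fin (2*k+1))
      (⟨i.val, by have := i.isLt; omega⟩ : Fin (2*k+1)) (1:ℝ)

lemma trace_std_mul {n : Type*} [Fintype n] [DecidableEq n] (r c : n)
    (M : Matrix n n ℝ) : Matrix.trace (Matrix.single r c (1:ℝ) * M) = M c r := by
  rw [Matrix.trace]
  rw [Finset.sum_eq_single r]
  · simp [Matrix.diag]
  · intro d _ hd
    simp [Matrix.diag, Matrix.single_mul_apply_of_ne _ _ _ _ _ hd]
  · simp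

lemma trace_F_mul (k : ℕ) (lam : Fin k → ℝ) (M : Matrix (Fin (2*k+1)) (Fin (2*k+1)) ℝ) :
    Matrix.trace (FregOdd k lam * M) =
      ∑ i : Fin k, lam i * M (⟨i.val, by omega⟩ : Fin (2*k+1)) ⟨2*k - i.val, by omega⟩ := by
  rw [FregOdd, Finset.sum_mul, Matrix.trace_sum]
  refine Finset.sum_congr rfl fun i _ => ?_
  rw [smul_mul_assoc, Matrix.trace_smul, trace_std_mul]
  simp

lemma Bf_std (k : ℕ) (lam : Fin k → ℝ) (w : Matrix (Fin (2*k+1)) (Fin (2*k+1)) ℝ)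
    (p q : Fin (2*k+1)) (hp : p.val ≤ k) (hq : k+1 ≤ q.val) :
    Matrix.trace (FregOdd k lam * (w * single p q (1:ℝ) - single p q (1:ℝ) * w))
    = lam ⟨2*k - q.val, by omega⟩ * w ⟨2*k - q.val, by omega⟩ p
      - (if h : p.val < k then lam ⟨p.val, h⟩ * w q ⟨2*k - p.val, by omega⟩ else 0) := by
  rw [mul_sub, Matrix.trace_sub, trace_F_mul, trace_F_mul]
  congr 1
  · rw [Finset.sum_eq_single (⟨2*k - q.val, by omega⟩ : Fin k)]
    · have hcol : (⟨2*k - (2*k - q.val), by omega⟩ : Fin (2*k+1)) = q := by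
        apply Fin.ext; simp; omega
      rw [hcol, Matrix.mul_single_apply_same, mul_one]
    · intro i _ hi
      rw [Matrix.mul_single_apply_of_ne, mul_zero]
      intro hcq
      apply hi
      apply Fin.ext
      have := congrArg Fin.val hcq
      simp at this ⊢
      omega
    · simp
  · by_cases hpk : p.val < k
    · rw [dif_pos hpk, Finset.sum_eq_single (⟨p.val, hpk⟩ : Fin k)]
      · have hrow : (⟨p.val, by omega⟩ : Fin (2*k+1)) = p := by apply Fin.ext; rfl
        rw [hrow, Matrix.single_mul_apply_same, one_mul]
      · intro i _ hi
        rw [Matrix.single_mul_apply_of_ne, mul_zero]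
        intro hcq
        apply hi
        apply Fin.ext
        have := congrArg Fin.val hcq
        simp at this ⊢
        omega
      · simp
    · rw [dif_neg hpk]
      apply Finset.sum_eq_zero
      intro i _
      rw [Matrix.single_mul_apply_of_ne, mul_zero]
      intro hip
      have := congrArg Fin.val hip
      simp at this
      omega

lemma std_mem_polOdd (k : ℕ) (p q : Fin (2*k+1)) (hp : p.val ≤ k) (hq : k+1 ≤ q.val) :
    Matrix.single p q (1:ℝ) ∈ polOdd k := by
  intro a b hab
  apply Matrix.single_apply_of_ne
  rintro ⟨rfl, rfl⟩
  exact hab ⟨hp, hq⟩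

/-- Coordinates on `polOdd k`. -/
def polEquiv (k : ℕ) : (polOdd k) ≃ₗ[ℝ] ((Fin (k+1) × Fin k) → ℝ) where
  toFun x := fun ij => x.val ⟨ij.1.val, by omega⟩ ⟨k+1+ij.2.val, by omega⟩
  map_add' x y := rfl
  map_smul' c x := rfl
  invFun f := ⟨Matrix.of fun a b =>
      if h : a.val ≤ k ∧ k+1 ≤ b.val then f (⟨a.val, by omega⟩, ⟨b.val - (k+1), by omega⟩)
      else 0,
    fun a b hab => dif_neg hab⟩
  left_inv := by
    intro x
    apply Subtype.ext
    ext a b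
    by_cases h : a.val ≤ k ∧ k+1 ≤ b.val
    · simp only [Matrix.of_apply, dif_pos h]
      have ha : (⟨a.val, by omega⟩ : Fin (2*k+1)) = a := rfl
      have hb : (⟨k+1+(b.val-(k+1)), by omega⟩ : Fin (2*k+1)) = b := Fin.ext (by simp; omega)
      rw [ha, hb]
    · simp only [Matrix.of_apply, dif_neg h]
      exact (x.2 a b h).symm
  right_inv := by
    intro f
    funext ij
    simp only [Matrix.of_apply]
    rw [dif_pos ⟨by omega, by omega⟩]
    congr 1
    apply Prod.ext <;> apply Fin.ext <;> simp

/-- `𝔭` is an abelian Lie subalgebra of `ut(2k+1,ℝ)` of dimension `k²+k`, the form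
`B_f(x,y) = f(⁅x,y⁆)` vanishes identically on `𝔭`, and `𝔭` is a polarization of the
regular functional `f = trace(F·–)`: any subspace of `ut(2k+1,ℝ)` containing `𝔭` on which
`B_f` vanishes equals `𝔭`. -/
theorem polarization_regular_odd (k : ℕ) (hk : 1 ≤ k)
    (lam : Fin k → ℝ) (hlam : ∀ i : Fin k, lam i ≠ 0) :
    ((polOdd k : Set (Matrix (Fin (2*k+1)) (Fin (2*k+1)) ℝ)) ⊆ {x | IsStrictUpper x}) ∧
    (∀ x ∈ polOdd k, ∀ y ∈ polOdd k, x * y - y * x = 0) ∧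
    Module.finrank ℝ ↥(polOdd k) = k^2 + k ∧
    (∀ x ∈ polOdd k, ∀ y ∈ polOdd k, Matrix.trace (FregOdd k lam * (x * y - y * x)) = 0) ∧
    (∀ W : Submodule ℝ (Matrix (Fin (2*k+1)) (Fin (2*k+1)) ℝ), polOdd k ≤ W →
      (∀ x ∈ W, IsStrictUpper x) →
      (∀ x ∈ W, ∀ y ∈ W, Matrix.trace (FregOdd k lam * (x * y - y * x)) = 0) →
      W = polOdd k) := by
  have hmul : ∀ x ∈ polOdd k, ∀ y ∈ polOdd k, x * y = 0 := by
    intro x hx y hy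
    ext a b
    rw [Matrix.mul_apply]
    apply Finset.sum_eq_zero
    intro c _
    by_cases hc : c.val ≤ k
    · rw [hx a c (by omega), zero_mul]
    · rw [hy c b (by omega), mul_zero]
  refine ⟨?_, ?_, ?_, ?_, ?_⟩
  · -- strictly upper
    intro x hx i j hji
    exact hx i j (by rcases Fin.le_def.mp hji with h; omega)
  · intro x hx y hy
    rw [hmul x hx y hy, hmul y hy x hx, sub_zero]
  · -- dimension
    rw [LinearEquiv.finrank_eq (polEquiv k), Module.finrank_fintype_fun_eq_card]
    simp [Fintype.card_prod]
    ring
  · intro x hx y hy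
    rw [hmul x hx y hy, hmul y hy x hx, sub_zero, Matrix.mul_zero, Matrix.trace_zero]
  · -- polarization maximality
    intro W hPW hup hB
    refine le_antisymm ?_ hPW
    intro w hw
    intro a b hab
    by_cases hba : b.val ≤ a.val
    · exact hup w hw a b (Fin.le_def.mpr hba)
    push_neg at hba
    by_cases hbk : b.val ≤ k
    · -- case a < b ≤ k : use p = b, q = ⟨2k - a⟩
      have haq : k + 1 ≤ (⟨2*k - a.val, by omega⟩ : Fin (2*k+1)).val := by
        show k + 1 ≤ 2*k - a.val; omega
      have key := hB w hw (single b (⟨2*k - a.val, by omega⟩ : Fin (2*k+1)) (1:ℝ))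
        (hPW (std_mem_polOdd k b _ hbk haq))
      rw [Bf_std k lam w b (⟨2*k - a.val, by omega⟩ : Fin (2*k+1)) hbk haq] at key
      simp only [show (⟨2*k - (⟨2*k - a.val, by omega⟩ : Fin (2*k+1)).val, by omega⟩ :
          Fin (2*k+1)) = a from Fin.ext (by show 2*k - (2*k - a.val) = a.val; omega)] at key
      have hsnd : (if h : b.val < k then lam ⟨b.val, h⟩ *
          w (⟨2*k - a.val, by omega⟩ : Fin (2*k+1)) ⟨2*k - b.val, by omega⟩ else 0) = 0 := by
        by_cases hbk' : b.val < k
        · rw [dif_pos hbk', hup w hw _ _ (Fin.mk_le_mk.mpr (by omega)), mul_zero]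
        · rw [dif_neg hbk']
      simp only [hsnd, sub_zero] at key
      exact (mul_eq_zero.mp key).resolve_left (hlam _)
    · -- case k+1 ≤ a < b : use p = ⟨2k - b⟩, q = a
      have hak : k + 1 ≤ a.val := by
        rcases not_and_or.mp hab with h | h <;> omega
      have hbb : k + 2 ≤ b.val := by omega
      have hpv : (⟨2*k - b.val, by omega⟩ : Fin (2*k+1)).val ≤ k := by
        show 2*k - b.val ≤ k; omega
      have key := hB w hw (single (⟨2*k - b.val, by omega⟩ : Fin (2*k+1)) a (1:ℝ))
        (hPW (std_mem_polOdd k _ a hpv hak))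
      rw [Bf_std k lam w (⟨2*k - b.val, by omega⟩ : Fin (2*k+1)) a hpv hak] at key
      have hfst : w (⟨2*k - a.val, by omega⟩ : Fin (2*k+1))
          (⟨2*k - b.val, by omega⟩ : Fin (2*k+1)) = 0 :=
        hup w hw _ _ (Fin.mk_le_mk.mpr (by omega))
      simp only [hfst, mul_zero, zero_sub, neg_eq_zero,
        dif_pos (show (⟨2*k - b.val, by omega⟩ : Fin (2*k+1)).val < k by
          show 2*k - b.val < k; omega),
        show (⟨2*k - (⟨2*k - b.val, by omega⟩ : Fin (2*k+1)).val, by omega⟩ :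
          Fin (2*k+1)) = b from Fin.ext (by show 2*k - (2*k - b.val) = b.val; omega)] at key
      exact (mul_eq_zero.mp key).resolve_left (hlam _)

end
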